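/- Let Ω be a probability space, n a positive natural number, and b = 2^m. Let H1, H2 : Ω → (Fin n → Fin b) be independent random functions, each a pairwise independent uniform family into Fin b. Then for any two distinct index pairs (i,j) ≠ (i',j') in Fin n × Fin n, the collision probability satisfies Pr[H1(i) XOR H2(j) = H1(i') XOR H2(j')] = 1/b. -/

import Mathlib

open MeasureTheory
open scoped ENNReal ProbabilityTheory

/-- Bitwise XOR on `Fin (2^m)`. -/
def fxor {m : ℕ} (i j : Fin (2^m)) : Fin (2^m) :=
  ⟨i.val ^^^ j.val, Nat.xor_lt_two_pow i.isLt j.isLt⟩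

section XorHashAux

lemma fxor_eq_iff {m : ℕ} (a x y : Fin (2^m)) : fxor a x = y ↔ x = fxor a y := by
  simp only [fxor, Fin.ext_iff]
  constructor
  · rintro h; rw [← h, ← Nat.xor_assoc, Nat.xor_self, Nat.zero_xor]
  · rintro h; rw [h, ← Nat.xor_assoc, Nat.xor_self, Nat.zero_xor]

lemma fxor_right_cancel {m : ℕ} (x y c : Fin (2^m)) : fxor x c = fxor y c ↔ x = y := by
  simp only [fxor, Fin.ext_iff]
  constructor
  · intro h
    have := congrArg (· ^^^ c.val) h
    simpa [Nat.xor_assoc, Nat.xor_self] using this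
  · rintro h; rw [h]

variable {Ω : Type*} [MeasureSpace Ω] [IsProbabilityMeasure (ℙ : Measure Ω)]

lemma nullMeasurableSet_of_add_compl {A : Set Ω}
    (h : ℙ A + ℙ Aᶜ = 1) : NullMeasurableSet A ℙ := by
  set E := toMeasurable ℙ A with hE
  set F := toMeasurable ℙ Aᶜ with hF
  have hEm : MeasurableSet E := measurableSet_toMeasurable _ _
  have hFm : MeasurableSet F := measurableSet_toMeasurable _ _
  have hAE : A ⊆ E := subset_toMeasurable _ _
  have hAF : Aᶜ ⊆ F := subset_toMeasurable _ _
  have hEF : E ∪ F = Set.univ := by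
    apply Set.eq_univ_of_univ_subset
    intro x _
    by_cases hx : x ∈ A
    · exact Or.inl (hAE hx)
    · exact Or.inr (hAF hx)
  have hsum : ℙ (E ∪ F) + ℙ (E ∩ F) = ℙ E + ℙ F := measure_union_add_inter E hFm
  rw [hEF, measure_univ, measure_toMeasurable, measure_toMeasurable, h] at hsum
  have hnull : ℙ (E ∩ F) = 0 := by
    rw [← ENNReal.add_right_inj ENNReal.one_ne_top, add_zero, hsum]
  have hdiff : ℙ (E \ A) = 0 := by
    apply measure_mono_null _ hnull
    intro x hx
    exact ⟨hx.1, hAF hx.2⟩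
  have hae : A =ᵐ[ℙ] E := by
    rw [MeasureTheory.ae_eq_set]
    refine ⟨?_, hdiff⟩
    rw [Set.diff_eq_empty.mpr hAE, measure_empty]
  exact hEm.nullMeasurableSet.congr hae.symm

variable {n m : ℕ}

lemma two_pow_ne_zero' : (2:ℝ≥0∞)^m ≠ 0 := pow_ne_zero _ two_ne_zero
lemma two_pow_ne_top' : (2:ℝ≥0∞)^m ≠ ∞ := ENNReal.pow_ne_top ENNReal.ofNat_ne_top

lemma sum_const_inv : ∑ _v : Fin (2^m), (1 / (2^m : ℝ≥0∞)) = 1 := by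
  rw [Finset.sum_const, Finset.card_univ, Fintype.card_fin, nsmul_eq_mul, one_div,
    Nat.cast_pow, Nat.cast_ofNat]
  exact ENNReal.mul_inv_cancel two_pow_ne_zero' two_pow_ne_top'

lemma sum_const_inv_sq :
    ∑ _v : Fin (2^m), (1 / (2^m : ℝ≥0∞) * (1 / (2^m : ℝ≥0∞))) = 1 / (2^m : ℝ≥0∞) := by
  rw [Finset.sum_const, Finset.card_univ, Fintype.card_fin, nsmul_eq_mul,
    Nat.cast_pow, Nat.cast_ofNat, one_div, ← mul_assoc,
    ENNReal.mul_inv_cancel two_pow_ne_zero' two_pow_ne_top', one_mul]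

lemma coord_nullMeasurable (H : Ω → Fin n → Fin (2^m))
    (hunif : ∀ i u, ℙ {ω | H ω i = u} = 1 / (2^m : ℝ≥0∞))
    (i : Fin n) (u : Fin (2^m)) : NullMeasurableSet {ω | H ω i = u} ℙ := by
  apply nullMeasurableSet_of_add_compl
  apply le_antisymm
  · have hcompl : {ω | H ω i = u}ᶜ ⊆ ⋃ v ∈ Finset.univ.erase u, {ω | H ω i = v} := by
      intro ω hω
      simp only [Set.mem_compl_iff, Set.mem_setOf_eq] at hω
      simp only [Set.mem_iUnion, Set.mem_setOf_eq, Finset.mem_erase, Finset.mem_univ, and_true]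
      exact ⟨H ω i, hω, rfl⟩
    have h1 : ℙ ({ω | H ω i = u}ᶜ) ≤ ∑ v ∈ Finset.univ.erase u, ℙ {ω | H ω i = v} :=
      le_trans (measure_mono hcompl) (measure_biUnion_finset_le _ _)
    calc ℙ {ω | H ω i = u} + ℙ ({ω | H ω i = u}ᶜ)
        ≤ ℙ {ω | H ω i = u} + ∑ v ∈ Finset.univ.erase u, ℙ {ω | H ω i = v} := by
          exact add_le_add_right h1 _
      _ = ∑ v : Fin (2^m), ℙ {ω | H ω i = v} :=
          Finset.add_sum_erase _ (fun v => ℙ {ω | H ω i = v}) (Finset.mem_univ u)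
      _ = 1 := by simp only [hunif]; exact sum_const_inv
  · calc (1:ℝ≥0∞) = ℙ (Set.univ : Set Ω) := measure_univ.symm
      _ = ℙ ({ω | H ω i = u} ∪ {ω | H ω i = u}ᶜ) := by rw [Set.union_compl_self]
      _ ≤ _ := measure_union_le _ _

lemma atom_nullMeasurable (H : Ω → Fin n → Fin (2^m))
    (hunif : ∀ i u, ℙ {ω | H ω i = u} = 1 / (2^m : ℝ≥0∞))
    (f : Fin n → Fin (2^m)) : NullMeasurableSet {ω | H ω = f} ℙ := by
  have : {ω | H ω = f} = ⋂ i, {ω | H ω i = f i} := by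
    ext ω; simp [funext_iff]
  rw [this]
  exact NullMeasurableSet.iInter fun i => coord_nullMeasurable H hunif i (f i)

lemma master_single (H : Ω → Fin n → Fin (2^m))
    (hunif : ∀ i u, ℙ {ω | H ω i = u} = 1 / (2^m : ℝ≥0∞))
    (Q : (Fin n → Fin (2^m)) → Prop) [DecidablePred Q] :
    ℙ {ω | Q (H ω)} = ∑ f ∈ Finset.univ.filter Q, ℙ {ω | H ω = f} := by
  have hset : {ω | Q (H ω)} = ⋃ f ∈ Finset.univ.filter Q, {ω | H ω = f} := by
    ext ω
    simp only [Set.mem_setOf_eq, Set.mem_iUnion, Finset.mem_filter, Finset.mem_univ, true_and]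
    constructor
    · intro h; exact ⟨H ω, h, rfl⟩
    · rintro ⟨f, hQ, hf⟩; rw [hf]; exact hQ
  rw [hset, measure_biUnion_finset₀]
  · intro f _ g _ hfg
    apply Disjoint.aedisjoint
    simp only [Function.onFun]
    rw [Set.disjoint_left]
    intro ω h1 h2
    exact hfg (h1.symm.trans h2)
  · exact fun f _ => atom_nullMeasurable H hunif f

lemma sum_atoms_one (H : Ω → Fin n → Fin (2^m))
    (hunif : ∀ i u, ℙ {ω | H ω i = u} = 1 / (2^m : ℝ≥0∞)) :
    ∑ f : Fin n → Fin (2^m), ℙ {ω | H ω = f} = 1 := by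
  classical
  have := master_single H hunif (fun _ => True)
  simp only [Set.setOf_true, measure_univ, Finset.filter_true] at this
  exact this.symm

lemma sum_atoms_pair (H : Ω → Fin n → Fin (2^m))
    (hunif : ∀ i u, ℙ {ω | H ω i = u} = 1 / (2^m : ℝ≥0∞))
    (hpair : ∀ i i', i ≠ i' → ∀ u v,
      ℙ {ω | H ω i = u ∧ H ω i' = v} = ℙ {ω | H ω i = u} * ℙ {ω | H ω i' = v})
    (i i' : Fin n) (hii' : i ≠ i') (u u' : Fin (2^m)) :
    ∑ f ∈ Finset.univ.filter (fun f => f i = u ∧ f i' = u'), ℙ {ω | H ω = f}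
      = 1 / (2^m : ℝ≥0∞) * (1 / (2^m : ℝ≥0∞)) := by
  classical
  rw [← master_single H hunif (fun f => f i = u ∧ f i' = u'), hpair i i' hii' u u',
    hunif, hunif]

lemma fiber_general (H : Ω → Fin n → Fin (2^m))
    (hunif : ∀ i u, ℙ {ω | H ω i = u} = 1 / (2^m : ℝ≥0∞))
    (hpair : ∀ i i', i ≠ i' → ∀ u v,
      ℙ {ω | H ω i = u ∧ H ω i' = v} = ℙ {ω | H ω i = u} * ℙ {ω | H ω i' = v})
    (j j' : Fin n) (hjj' : j ≠ j') (t : Fin (2^m) → Fin (2^m)) :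
    ∑ f ∈ Finset.univ.filter (fun f => f j' = t (f j)), ℙ {ω | H ω = f}
      = 1 / (2^m : ℝ≥0∞) := by
  classical
  have key : ∀ f : Fin n → Fin (2^m),
      (if f j' = t (f j) then ℙ {ω | H ω = f} else 0)
        = ∑ v : Fin (2^m), (if f j = v ∧ f j' = t v then ℙ {ω | H ω = f} else 0) := by
    intro f
    rw [Finset.sum_eq_single (f j)]
    · simp
    · intro v _ hv
      rw [if_neg]
      rintro ⟨h1, _⟩
      exact hv h1.symm
    · intro h; exact absurd (Finset.mem_univ _) h
  calc ∑ f ∈ Finset.univ.filter (fun f => f j' = t (f j)), ℙ {ω | H ω = f}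
      = ∑ f : Fin n → Fin (2^m), (if f j' = t (f j) then ℙ {ω | H ω = f} else 0) :=
        Finset.sum_filter _ _
    _ = ∑ f : Fin n → Fin (2^m), ∑ v : Fin (2^m),
          (if f j = v ∧ f j' = t v then ℙ {ω | H ω = f} else 0) :=
        Finset.sum_congr rfl fun f _ => key f
    _ = ∑ v : Fin (2^m), ∑ f : Fin n → Fin (2^m),
          (if f j = v ∧ f j' = t v then ℙ {ω | H ω = f} else 0) := Finset.sum_comm
    _ = ∑ v : Fin (2^m), ∑ f ∈ Finset.univ.filter (fun f => f j = v ∧ f j' = t v),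
          ℙ {ω | H ω = f} :=
        Finset.sum_congr rfl fun v _ => (Finset.sum_filter _ _).symm
    _ = ∑ _v : Fin (2^m), (1 / (2^m : ℝ≥0∞) * (1 / (2^m : ℝ≥0∞))) :=
        Finset.sum_congr rfl fun v _ => sum_atoms_pair H hunif hpair j j' hjj' v (t v)
    _ = 1 / (2^m : ℝ≥0∞) := sum_const_inv_sq

lemma master_joint (H1 H2 : Ω → Fin n → Fin (2^m))
    (hH1unif : ∀ i u, ℙ {ω | H1 ω i = u} = 1 / (2^m : ℝ≥0∞))
    (hH2unif : ∀ j u, ℙ {ω | H2 ω j = u} = 1 / (2^m : ℝ≥0∞))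
    (hindep : ∀ f g : Fin n → Fin (2^m),
      ℙ {ω | H1 ω = f ∧ H2 ω = g} = ℙ {ω | H1 ω = f} * ℙ {ω | H2 ω = g})
    (R : ((Fin n → Fin (2^m)) × (Fin n → Fin (2^m))) → Prop) [DecidablePred R] :
    ℙ {ω | R (H1 ω, H2 ω)}
      = ∑ fg ∈ Finset.univ.filter R, ℙ {ω | H1 ω = fg.1} * ℙ {ω | H2 ω = fg.2} := by
  have hset : {ω | R (H1 ω, H2 ω)}
      = ⋃ fg ∈ Finset.univ.filter R, ({ω | H1 ω = fg.1} ∩ {ω | H2 ω = fg.2}) := by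
    ext ω
    simp only [Set.mem_setOf_eq, Set.mem_iUnion, Finset.mem_filter, Finset.mem_univ, true_and,
      Set.mem_inter_iff]
    constructor
    · intro h; exact ⟨(H1 ω, H2 ω), h, rfl, rfl⟩
    · rintro ⟨fg, hR, h1, h2⟩
      have : (H1 ω, H2 ω) = fg := Prod.ext h1 h2
      rw [this]; exact hR
  rw [hset, measure_biUnion_finset₀]
  · refine Finset.sum_congr rfl fun fg _ => ?_
    rw [← hindep fg.1 fg.2, Set.setOf_and]
  · intro fg _ fg' _ hne
    apply Disjoint.aedisjoint
    simp only [Function.onFun]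
    rw [Set.disjoint_left]
    rintro ω ⟨ha, hb⟩ ⟨ha', hb'⟩
    exact hne (Prod.ext (ha.symm.trans ha') (hb.symm.trans hb'))
  · intro fg _
    exact (atom_nullMeasurable H1 hH1unif fg.1).inter (atom_nullMeasurable H2 hH2unif fg.2)

end XorHashAux

/-- If `H1, H2 : Ω → (Fin n → Fin b)` with `b = 2^m` are independent random
functions, each a pairwise independent uniform family into `Fin b`, then for any
two distinct index pairs `(i,j) ≠ (i',j')`, the collision probability satisfies
`Pr[H1(i) XOR H2(j) = H1(i') XOR H2(j')] = 1/b`. -/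
theorem xor_hash_collision_probability
    {Ω : Type*} [MeasureSpace Ω] [IsProbabilityMeasure (ℙ : Measure Ω)]
    (n m : ℕ) (hn : 0 < n) (H1 H2 : Ω → Fin n → Fin (2^m))
    -- H1 and H2 are independent (as function-valued random variables):
    (hindep : ∀ f g : Fin n → Fin (2^m),
      ℙ {ω | H1 ω = f ∧ H2 ω = g} = ℙ {ω | H1 ω = f} * ℙ {ω | H2 ω = g})
    -- H1 is a pairwise independent uniform family:
    (hH1unif : ∀ i u, ℙ {ω | H1 ω i = u} = 1 / (2^m : ℝ≥0∞))
    (hH1pair : ∀ i i', i ≠ i' → ∀ u v,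
      ℙ {ω | H1 ω i = u ∧ H1 ω i' = v} = ℙ {ω | H1 ω i = u} * ℙ {ω | H1 ω i' = v})
    -- H2 is a pairwise independent uniform family:
    (hH2unif : ∀ j u, ℙ {ω | H2 ω j = u} = 1 / (2^m : ℝ≥0∞))
    (hH2pair : ∀ j j', j ≠ j' → ∀ u v,
      ℙ {ω | H2 ω j = u ∧ H2 ω j' = v} = ℙ {ω | H2 ω j = u} * ℙ {ω | H2 ω j' = v})
    (i j i' j' : Fin n) (hne : (i, j) ≠ (i', j')) :
    ℙ {ω | fxor (H1 ω i) (H2 ω j) = fxor (H1 ω i') (H2 ω j')} = 1 / (2^m : ℝ≥0∞) := by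
  have key := master_joint H1 H2 hH1unif hH2unif hindep
    (fun fg => fxor (fg.1 i) (fg.2 j) = fxor (fg.1 i') (fg.2 j'))
  rw [key, Finset.sum_filter, Fintype.sum_prod_type]
  by_cases hj : j = j'
  · subst hj
    have hii' : i ≠ i' := fun h => hne (by rw [h])
    calc ∑ f : Fin n → Fin (2^m), ∑ g : Fin n → Fin (2^m),
          (if fxor (f i) (g j) = fxor (f i') (g j) then
            ℙ {ω | H1 ω = f} * ℙ {ω | H2 ω = g} else 0)
        = ∑ f : Fin n → Fin (2^m), (if f i' = id (f i) then ℙ {ω | H1 ω = f} else 0) := by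
          refine Finset.sum_congr rfl fun f _ => ?_
          by_cases hc : f i = f i'
          · rw [if_pos (show f i' = id (f i) by simp [hc]),
              Finset.sum_congr rfl fun (g : Fin n → Fin (2^m)) _ =>
                if_pos ((fxor_right_cancel _ _ _).mpr hc),
              ← Finset.mul_sum, sum_atoms_one H2 hH2unif, mul_one]
          · rw [if_neg (by simp [hc, eq_comm])]
            refine Finset.sum_eq_zero fun g _ => ?_
            rw [if_neg (fun h => hc ((fxor_right_cancel _ _ _).mp h))]
      _ = ∑ f ∈ Finset.univ.filter (fun f => f i' = id (f i)), ℙ {ω | H1 ω = f} :=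
          (Finset.sum_filter _ _).symm
      _ = 1 / (2^m : ℝ≥0∞) := fiber_general H1 hH1unif hH1pair i i' hii' id
  · calc ∑ f : Fin n → Fin (2^m), ∑ g : Fin n → Fin (2^m),
          (if fxor (f i) (g j) = fxor (f i') (g j') then
            ℙ {ω | H1 ω = f} * ℙ {ω | H2 ω = g} else 0)
        = ∑ f : Fin n → Fin (2^m), ℙ {ω | H1 ω = f} * (1 / (2^m : ℝ≥0∞)) := by
          refine Finset.sum_congr rfl fun f _ => ?_
          have hstep : ∀ g : Fin n → Fin (2^m),
              (if fxor (f i) (g j) = fxor (f i') (g j') then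
                ℙ {ω | H1 ω = f} * ℙ {ω | H2 ω = g} else 0)
              = ℙ {ω | H1 ω = f} *
                (if g j' = fxor (f i') (fxor (f i) (g j)) then ℙ {ω | H2 ω = g} else 0) := by
            intro g
            have hcond : (fxor (f i) (g j) = fxor (f i') (g j'))
                ↔ (g j' = fxor (f i') (fxor (f i) (g j))) := by
              rw [eq_comm, fxor_eq_iff]
            by_cases hc : fxor (f i) (g j) = fxor (f i') (g j')
            · rw [if_pos hc, if_pos (hcond.mp hc)]
            · rw [if_neg hc, if_neg (fun h => hc (hcond.mpr h)), mul_zero]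
          rw [Finset.sum_congr rfl fun g _ => hstep g, ← Finset.mul_sum]
          congr 1
          calc ∑ g : Fin n → Fin (2^m),
                (if g j' = fxor (f i') (fxor (f i) (g j)) then ℙ {ω | H2 ω = g} else 0)
              = ∑ g ∈ Finset.univ.filter
                  (fun g => g j' = (fun v => fxor (f i') (fxor (f i) v)) (g j)),
                  ℙ {ω | H2 ω = g} := (Finset.sum_filter _ _).symm
            _ = 1 / (2^m : ℝ≥0∞) :=
                fiber_general H2 hH2unif hH2pair j j' hj (fun v => fxor (f i') (fxor (f i) v))
      _ = 1 / (2^m : ℝ≥0∞) := by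
          rw [← Finset.sum_mul, sum_atoms_one H1 hH1unif, one_mul]
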